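/- Let X be a separable complete metric space and let Φ be a set of bounded continuous real-valued functions on X that separates points of X (for any x ≠ y there is φ ∈ Φ with φ(x) ≠ φ(y)). Let Λ be a dense subset of (0,∞). If w, v : [0,∞) → X are continuous paths such that ∫₀^∞ e^{−λt} φ(w(t)) dt = ∫₀^∞ e^{−λt} φ(v(t)) dt for every λ ∈ Λ and every φ ∈ Φ, then w(t) = v(t) for all t ≥ 0. -/

import Mathlib

open MeasureTheory Set
open scoped NNReal

noncomputable section

/-- The space `Ω = C([0,∞) → X)` with the compact-open topology. -/
abbrev IPath (X : Type*) [TopologicalSpace X] : Type _ := C(ℝ≥0, X)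

variable {X : Type*} [TopologicalSpace X]

/-- The shift `θ_s : w(·) ↦ w(s + ·)`. -/
def shift (s : ℝ≥0) (w : IPath X) : IPath X :=
  w.comp ⟨fun t => s + t, by fun_prop⟩

/-- The splicing `w ⋈_s v` of two paths with `w s = v 0`. -/
def splice (s : ℝ≥0) (w v : IPath X) (h : w s = v 0) : IPath X :=
  ⟨fun t => if t ≤ s then w t else v (t - s), by
    refine Continuous.if_le w.continuous (v.continuous.comp ?_) continuous_id
      continuous_const ?_
    · exact continuous_id.sub continuous_const
    · intro t ht
      rw [ht, tsub_self]
      exact h⟩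

/-- The functional `ζ(w) = ∫₀^∞ e^{-λ t} φ(w(t)) dt`. -/
def zeta (lam : ℝ) (phi : X → ℝ) (w : IPath X) : ℝ :=
  ∫ t in Ioi (0 : ℝ), Real.exp (-lam * t) * phi (w (Real.toNNReal t))


section LaplaceAux
open MeasureTheory Set Filter Real Polynomial
open scoped Topology

open scoped Topology

lemma aux_integ (d : ℝ → ℝ) (hd : Continuous d) (C : ℝ) (hC : ∀ t, |d t| ≤ C)
    {lam : ℝ} (hlam : 0 < lam) :
    IntegrableOn (fun t => Real.exp (-lam * t) * d t) (Ioi 0) := by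
  refine Integrable.mono' ((exp_neg_integrableOn_Ioi 0 hlam).const_mul C) ?_ ?_
  · exact ((Real.continuous_exp.comp (continuous_const.mul continuous_id)).mul hd)
      |>.aestronglyMeasurable.restrict
  · refine Eventually.of_forall fun t => ?_
    rw [Real.norm_eq_abs, abs_mul, abs_of_pos (Real.exp_pos _)]
    calc Real.exp (-lam * t) * |d t| ≤ Real.exp (-lam * t) * C :=
          mul_le_mul_of_nonneg_left (hC t) (Real.exp_pos _).le
      _ = C * Real.exp (-lam * t) := mul_comm _ _

lemma aux_ext (d : ℝ → ℝ) (hd : Continuous d) (C : ℝ) (hC : ∀ t, |d t| ≤ C)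
    (Λ : Set ℝ) (hΛ : Λ ⊆ Ioi (0 : ℝ)) (hΛdense : Ioi (0 : ℝ) ⊆ closure Λ)
    (h0 : ∀ lam ∈ Λ, ∫ t in Ioi (0:ℝ), Real.exp (-lam * t) * d t = 0) :
    ∀ lam > (0:ℝ), ∫ t in Ioi (0:ℝ), Real.exp (-lam * t) * d t = 0 := by
  intro lam hlam
  obtain ⟨x, hxΛ, hx⟩ := mem_closure_iff_seq_limit.1 (hΛdense hlam)
  have hCnn : 0 ≤ C := (abs_nonneg _).trans (hC 0)
  have key : Tendsto (fun n => ∫ t in Ioi (0:ℝ), Real.exp (-(x n) * t) * d t) atTop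
      (𝓝 (∫ t in Ioi (0:ℝ), Real.exp (-lam * t) * d t)) := by
    refine tendsto_integral_filter_of_dominated_convergence
      (fun t => C * Real.exp (-(lam/2) * t)) ?_ ?_ ?_ ?_
    · refine Eventually.of_forall fun n => ?_
      exact ((Real.continuous_exp.comp (continuous_const.mul continuous_id)).mul hd)
        |>.aestronglyMeasurable.restrict
    · have hev : ∀ᶠ n in atTop, lam / 2 ≤ x n :=
        hx.eventually (eventually_ge_nhds (by linarith : lam / 2 < lam))
      refine hev.mono fun n hn => ?_
      filter_upwards [ae_restrict_mem measurableSet_Ioi] with t ht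
      rw [Real.norm_eq_abs, abs_mul, abs_of_pos (Real.exp_pos _)]
      have h1 : Real.exp (-(x n) * t) ≤ Real.exp (-(lam/2) * t) := by
        apply Real.exp_le_exp.2
        have := le_of_lt (mem_Ioi.1 ht)
        nlinarith
      calc Real.exp (-(x n) * t) * |d t| ≤ Real.exp (-(lam/2) * t) * C :=
            mul_le_mul h1 (hC t) (abs_nonneg _) (Real.exp_pos _).le
        _ = C * Real.exp (-(lam/2) * t) := mul_comm _ _
    · exact (exp_neg_integrableOn_Ioi 0 (by linarith)).const_mul C
    · refine Eventually.of_forall fun t => ?_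
      exact (((Real.continuous_exp.tendsto _).comp ((hx.neg).mul_const t)).mul_const (d t))
  have : Tendsto (fun n => ∫ t in Ioi (0:ℝ), Real.exp (-(x n) * t) * d t) atTop (𝓝 0) := by
    refine Tendsto.congr (fun n => (h0 (x n) (hxΛ n)).symm) tendsto_const_nhds
  exact tendsto_nhds_unique key this



lemma aux_vanish (d : ℝ → ℝ) (hd : Continuous d) (C : ℝ) (hC : ∀ t, |d t| ≤ C)
    (h0 : ∀ lam > (0:ℝ), ∫ t in Ioi (0:ℝ), Real.exp (-lam * t) * d t = 0) :
    ∀ t > (0:ℝ), d t = 0 := by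
  set q : ℝ → ℝ := fun u => u * d (-Real.log u) with hq
  have hCnn : 0 ≤ C := (abs_nonneg _).trans (hC 0)
  have hqc : Continuous q := by
    rw [continuous_iff_continuousAt]
    intro u
    by_cases hu : u = 0
    · subst hu
      have h0' : q 0 = 0 := by simp [hq]
      unfold ContinuousAt
      rw [h0']
      have : Tendsto (fun u : ℝ => C * |u|) (𝓝 0) (𝓝 0) := by
        simpa using ((continuous_abs.tendsto (0:ℝ)).const_mul C)
      refine squeeze_zero_norm (fun u => ?_) this
      rw [Real.norm_eq_abs, abs_mul]
      exact mul_le_mul_of_nonneg_left (hC _) (abs_nonneg u) |>.trans_eq (mul_comm _ _)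
    · exact continuousAt_id.mul (hd.continuousAt.comp (Real.continuousAt_log hu).neg)
  -- image of exp(-·) on Ioi 0
  have himg : (fun t : ℝ => Real.exp (-t)) '' Ioi 0 = Ioo 0 1 := by
    ext y
    constructor
    · rintro ⟨t, ht, rfl⟩
      exact ⟨Real.exp_pos _, Real.exp_lt_one_iff.2 (by simpa using (mem_Ioi.1 ht))⟩
    · rintro ⟨hy0, hy1⟩
      refine ⟨-Real.log y, ?_, by simp [Real.exp_log hy0]⟩
      simpa using Real.log_neg hy0 hy1
  have hmom : ∀ n : ℕ, ∫ u in Ioo (0:ℝ) 1, u ^ n * q u = 0 := by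
    intro n
    have hder : ∀ x ∈ Ioi (0:ℝ), HasDerivWithinAt (fun t : ℝ => Real.exp (-t))
        (-Real.exp (-x)) (Ioi 0) x := by
      intro x _
      have : HasDerivAt (fun t : ℝ => Real.exp (-t)) (Real.exp (-x) * (-1)) x :=
        (Real.hasDerivAt_exp (-x)).comp x (hasDerivAt_neg x)
      simpa using this.hasDerivWithinAt
    have hinj : InjOn (fun t : ℝ => Real.exp (-t)) (Ioi 0) :=
      (Real.exp_injective.comp neg_injective).injOn
    have := integral_image_eq_integral_abs_deriv_smul measurableSet_Ioi hder hinj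
      (fun u => u ^ n * q u)
    rw [himg] at this
    rw [this]
    have hcong : ∀ x ∈ Ioi (0:ℝ),
        |(-Real.exp (-x))| • ((Real.exp (-x)) ^ n * q (Real.exp (-x)))
          = Real.exp (-((n:ℝ) + 2) * x) * d x := by
      intro x _
      have h1 : -Real.log (Real.exp (-x)) = x := by rw [Real.log_exp, neg_neg]
      have h2 : Real.exp (-((n:ℝ) + 2) * x) = Real.exp (-x) ^ (n + 2) := by
        rw [← Real.exp_nat_mul]
        congr 1
        push_cast
        ring
      rw [abs_neg, abs_of_pos (Real.exp_pos _), smul_eq_mul, hq]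
      simp only [h1, h2]
      ring
    rw [setIntegral_congr_fun measurableSet_Ioi hcong]
    exact h0 _ (by positivity)
  -- bound on q on Ioo 0 1
  have hqb : ∀ u ∈ Ioo (0:ℝ) 1, |q u| ≤ C := by
    intro u hu
    rw [hq, abs_mul]
    calc |u| * |d (-Real.log u)| ≤ 1 * C :=
      mul_le_mul (le_of_lt (by rw [abs_of_pos hu.1]; exact hu.2)) (hC _) (abs_nonneg _) one_pos.le
    _ = C := one_mul C
  -- integral of q * polynomial is 0
  have hqint : IntegrableOn q (Ioo (0:ℝ) 1) :=
    (hqc.integrableOn_Icc (a := 0) (b := 1)).mono_set Ioo_subset_Icc_self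
  have hpoly : ∀ P : ℝ[X], ∫ u in Ioo (0:ℝ) 1, q u * P.eval u = 0 := by
    intro P
    have heval : ∀ u : ℝ, q u * P.eval u
        = ∑ i ∈ Finset.range (P.natDegree + 1), P.coeff i * (u ^ i * q u) := by
      intro u
      rw [Polynomial.eval_eq_sum_range, Finset.mul_sum]
      exact Finset.sum_congr rfl fun i _ => by ring
    simp only [heval]
    rw [integral_finset_sum]
    · refine Finset.sum_eq_zero fun i _ => ?_
      rw [MeasureTheory.integral_const_mul, hmom i, mul_zero]
    · intro i _
      refine Integrable.const_mul ?_ _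
      exact ((continuous_pow i).mul hqc).integrableOn_Icc (a := 0) (b := 1)
        |>.mono_set Ioo_subset_Icc_self
  -- Weierstrass: ∫ q^2 = 0
  have hq2 : ∫ u in Ioo (0:ℝ) 1, q u ^ 2 = 0 := by
    have hper : ∀ ε > (0:ℝ), |∫ u in Ioo (0:ℝ) 1, q u ^ 2| ≤ C * ε := by
      intro ε hε
      set Q : C(Icc (0:ℝ) 1, ℝ) := ⟨fun u => q u.1, hqc.comp continuous_subtype_val⟩ with hQ
      have hdense := polynomialFunctions_closure_eq_top (0:ℝ) 1
      have hQmem : Q ∈ (polynomialFunctions (Icc (0:ℝ) 1)).topologicalClosure := by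
        rw [hdense]; trivial
      obtain ⟨p, hpmem, hpdist⟩ := Metric.mem_closure_iff.1 hQmem ε hε
      have hpoly' : ∃ P : ℝ[X], ∀ u : Icc (0:ℝ) 1, p u = P.eval (u : ℝ) := by
        have hmem2 : p ∈ (polynomialFunctions (Icc (0:ℝ) 1) : Set C(Icc (0:ℝ) 1, ℝ)) := hpmem
        rw [polynomialFunctions_coe] at hmem2
        obtain ⟨P, hP⟩ := hmem2
        exact ⟨P, fun u => by rw [← hP]; rfl⟩
      obtain ⟨P, hP⟩ := hpoly'
      have hap : ∀ u ∈ Ioo (0:ℝ) 1, |q u - P.eval u| ≤ ε := by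
        intro u hu
        have hu' : u ∈ Icc (0:ℝ) 1 := Ioo_subset_Icc_self hu
        have := ContinuousMap.dist_apply_le_dist (f := Q) (g := p) ⟨u, hu'⟩
        rw [Real.dist_eq] at this
        have : |q u - p ⟨u, hu'⟩| ≤ dist Q p := this
        rw [hP ⟨u, hu'⟩] at this
        exact this.trans hpdist.le
      have hsplit : ∫ u in Ioo (0:ℝ) 1, q u ^ 2
          = (∫ u in Ioo (0:ℝ) 1, q u * (q u - P.eval u)) := by
        have h1 : IntegrableOn (fun u => q u * (q u - P.eval u)) (Ioo (0:ℝ) 1) :=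
          (hqc.mul (hqc.sub (P.continuous_aeval.comp continuous_id))).integrableOn_Icc
            (a := 0) (b := 1) |>.mono_set Ioo_subset_Icc_self
        have h2 : IntegrableOn (fun u => q u * P.eval u) (Ioo (0:ℝ) 1) :=
          (hqc.mul P.continuous).integrableOn_Icc (a := 0) (b := 1)
            |>.mono_set Ioo_subset_Icc_self
        have : (fun u => q u ^ 2) = fun u => q u * (q u - P.eval u) + q u * P.eval u := by
          funext u; ring
        rw [this, integral_add h1 h2, hpoly P, add_zero]
      rw [hsplit]
      have hbd : ∀ u ∈ Ioo (0:ℝ) 1, ‖q u * (q u - P.eval u)‖ ≤ C * ε := by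
        intro u hu
        rw [Real.norm_eq_abs, abs_mul]
        exact mul_le_mul (hqb u hu) (hap u hu) (abs_nonneg _) hCnn
      have hvol : volume (Ioo (0:ℝ) 1) < ⊤ := by simp
      calc |∫ u in Ioo (0:ℝ) 1, q u * (q u - P.eval u)|
          ≤ C * ε * (volume (Ioo (0:ℝ) 1)).toReal := by
            rw [← Real.norm_eq_abs]
            exact norm_setIntegral_le_of_norm_le_const hvol (fun u hu => hbd u hu)
        _ = C * ε := by simp
    by_contra hne
    have habs : 0 < |∫ u in Ioo (0:ℝ) 1, q u ^ 2| := abs_pos.2 hne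
    have hC1 : (0:ℝ) < C + 1 := by linarith
    have h1 := hper (|∫ u in Ioo (0:ℝ) 1, q u ^ 2| / (C + 1))
      (by positivity)
    rw [mul_div_assoc'] at h1
    have h2 := (le_div_iff₀ hC1).1 h1
    nlinarith [habs]
  -- conclude q = 0 on Ioo 0 1
  have hq0 : ∀ u ∈ Ioo (0:ℝ) 1, q u = 0 := by
    have hint2 : IntegrableOn (fun u => q u ^ 2) (Ioo (0:ℝ) 1) :=
      ((hqc.pow 2).integrableOn_Icc (a := 0) (b := 1)).mono_set Ioo_subset_Icc_self
    have hae : (fun u => q u ^ 2) =ᵐ[volume.restrict (Ioo (0:ℝ) 1)] 0 :=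
      (setIntegral_eq_zero_iff_of_nonneg_ae
        (Eventually.of_forall fun u => sq_nonneg _) hint2).1 hq2
    have heq : EqOn (fun u => q u ^ 2) 0 (Ioo (0:ℝ) 1) :=
      Measure.eqOn_open_of_ae_eq hae isOpen_Ioo ((hqc.pow 2).continuousOn)
        continuousOn_const
    intro u hu
    have := heq hu
    simpa using pow_eq_zero_iff (n := 2) (by norm_num) |>.1 this
  intro t ht
  have hu : Real.exp (-t) ∈ Ioo (0:ℝ) 1 :=
    ⟨Real.exp_pos _, Real.exp_lt_one_iff.2 (by simpa using ht)⟩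
  have := hq0 _ hu
  rw [hq] at this
  simp only [Real.log_exp, neg_neg] at this
  rcases mul_eq_zero.1 this with h | h
  · exact absurd h (Real.exp_pos _).ne'
  · exact h


end LaplaceAux

/-- If a family `Φ` of bounded continuous functions separates the points of a separable
complete metric space `X`, and two continuous paths `w, v` in `X` satisfy
`∫₀^∞ e^{-λt} φ(w(t)) dt = ∫₀^∞ e^{-λt} φ(v(t)) dt` for every `λ` in a dense subset `Λ`
of `(0,∞)` and every `φ ∈ Φ`, then `w = v`. -/

theorem paths_equal_of_laplace_functionals_equal
    {X : Type*} [MetricSpace X] [CompleteSpace X] [SecondCountableTopology X]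
    (Φ : Set (X → ℝ))
    (hΦc : ∀ φ ∈ Φ, Continuous φ)
    (hΦb : ∀ φ ∈ Φ, ∃ M, ∀ y, |φ y| ≤ M)
    (hΦsep : ∀ x y : X, x ≠ y → ∃ φ ∈ Φ, φ x ≠ φ y)
    (Λ : Set ℝ) (hΛ : Λ ⊆ Ioi (0 : ℝ)) (hΛdense : Ioi (0 : ℝ) ⊆ closure Λ)
    (w v : IPath X)
    (heq : ∀ lam ∈ Λ, ∀ φ ∈ Φ, zeta lam φ w = zeta lam φ v) :
    ∀ t : ℝ≥0, w t = v t := by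
  have key : ∀ φ ∈ Φ, ∀ t : ℝ≥0, φ (w t) = φ (v t) := by
    intro φ hφ
    obtain ⟨M, hM⟩ := hΦb φ hφ
    set d : ℝ → ℝ := fun s => φ (w (Real.toNNReal s)) - φ (v (Real.toNNReal s)) with hdd
    have hdc : Continuous d :=
      (((hΦc φ hφ).comp (w.continuous.comp continuous_real_toNNReal))).sub
        (((hΦc φ hφ).comp (v.continuous.comp continuous_real_toNNReal)))
    have hCb : ∀ s, |d s| ≤ 2 * M := by
      intro s
      rw [hdd]
      have h1 : |φ (w (Real.toNNReal s)) - φ (v (Real.toNNReal s))|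
          ≤ |φ (w (Real.toNNReal s))| + |φ (v (Real.toNNReal s))| := by
        rw [sub_eq_add_neg]
        exact (abs_add_le _ _).trans (by rw [abs_neg])
      have h2 := hM (w (Real.toNNReal s))
      have h3 := hM (v (Real.toNNReal s))
      dsimp only
      linarith
    have hzero : ∀ lam ∈ Λ, ∫ t in Ioi (0:ℝ), Real.exp (-lam * t) * d t = 0 := by
      intro lam hlam
      have hlam' : (0:ℝ) < lam := hΛ hlam
      have hMnn : ∀ y, 0 ≤ M := fun y => (abs_nonneg _).trans (hM y)
      have hiw : MeasureTheory.IntegrableOn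
          (fun t => Real.exp (-lam * t) * φ (w (Real.toNNReal t))) (Ioi 0) :=
        aux_integ _ ((hΦc φ hφ).comp (w.continuous.comp continuous_real_toNNReal)) M
          (fun s => hM _) hlam'
      have hiv : MeasureTheory.IntegrableOn
          (fun t => Real.exp (-lam * t) * φ (v (Real.toNNReal t))) (Ioi 0) :=
        aux_integ _ ((hΦc φ hφ).comp (v.continuous.comp continuous_real_toNNReal)) M
          (fun s => hM _) hlam'
      calc ∫ t in Ioi (0:ℝ), Real.exp (-lam * t) * d t
          = ∫ t in Ioi (0:ℝ), (Real.exp (-lam * t) * φ (w (Real.toNNReal t))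
              - Real.exp (-lam * t) * φ (v (Real.toNNReal t))) := by
            simp only [hdd, mul_sub]
        _ = zeta lam φ w - zeta lam φ v := MeasureTheory.integral_sub hiw hiv
        _ = 0 := by rw [heq lam hlam φ hφ, sub_self]
    have hall := aux_ext d hdc (2 * M) hCb Λ hΛ hΛdense hzero
    have hvan := aux_vanish d hdc (2 * M) hCb hall
    have hd0 : d 0 = 0 := by
      have h1 : Filter.Tendsto d (nhdsWithin (0:ℝ) (Ioi 0)) (nhds (d 0)) :=
        (hdc.tendsto 0).mono_left nhdsWithin_le_nhds
      have h2 : Filter.Tendsto d (nhdsWithin (0:ℝ) (Ioi 0)) (nhds 0) := by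
        refine Filter.Tendsto.congr' ?_ tendsto_const_nhds
        filter_upwards [self_mem_nhdsWithin] with s hs
        exact (hvan s hs).symm
      exact tendsto_nhds_unique h1 h2
    intro t
    have hdt : d (t : ℝ) = 0 := by
      by_cases h : (0:ℝ) < (t : ℝ)
      · exact hvan _ h
      · have h0 : (t : ℝ) = 0 := le_antisymm (not_lt.1 h) t.coe_nonneg
        rw [h0]; exact hd0
    rw [hdd] at hdt
    simp only [Real.toNNReal_coe] at hdt
    exact sub_eq_zero.1 hdt
  intro t
  by_contra hne
  obtain ⟨φ, hφ, hneq⟩ := hΦsep _ _ hne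
  exact hneq (key φ hφ t)
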